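/- Along any solution (m, n, e) of the magnetic rod equations, the quantity C₁ = ½ n·n + λ m·e is constant in t (its derivative vanishes identically). -/

import Mathlib

open Matrix Real

set_option maxHeartbeats 2000000 in
/-- Along any solution `(m, n, e)` of the magnetic rod equations,
the Casimir `C₁ = ½ n·n + λ m·e` is constant in `t`: its derivative vanishes identically. -/
theorem casimir_C1_conserved
    (B₁ B₂ C H J K lam : ℝ)
    (hB₁ : 0 < B₁) (hB₂ : 0 < B₂) (hC : 0 < C) (hH : 0 < H) (hJ : 0 < J) (hK : 0 < K)
    (m n e : ℝ → Fin 3 → ℝ)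
    (hm : Differentiable ℝ m) (hn : Differentiable ℝ n) (he : Differentiable ℝ e)
    (u : ℝ → Fin 3 → ℝ) (hu : ∀ t, u t = ![m t 0 / B₁, m t 1 / B₂, m t 2 / C])
    (w : ℝ → Fin 3 → ℝ) (hw : ∀ t, w t = ![n t 0 / H, n t 1 / J, 1 + n t 2 / K])
    (heqm : ∀ t, deriv m t = m t ⨯₃ u t + n t ⨯₃ w t)
    (heqn : ∀ t, deriv n t = n t ⨯₃ u t + lam • (e t ⨯₃ w t))
    (heqe : ∀ t, deriv e t = e t ⨯₃ u t) :
    ∀ t, deriv (fun t => (1 / 2) * (n t ⬝ᵥ n t) + lam * (m t ⬝ᵥ e t)) t = 0 := by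
  intro t
  have proj : ∀ (f : ℝ → Fin 3 → ℝ), Differentiable ℝ f → ∀ i,
      HasDerivAt (fun s => f s i) (deriv f t i) t := by
    intro f hf i
    exact ((ContinuousLinearMap.proj i : (Fin 3 → ℝ) →L[ℝ] ℝ).hasFDerivAt.comp_hasDerivAt t
      (hf t).hasDerivAt)
  have Hm := proj m hm
  have Hn := proj n hn
  have He := proj e he
  have key : HasDerivAt (fun s => (1 / 2) * (n s ⬝ᵥ n s) + lam * (m s ⬝ᵥ e s))
      ((1/2) * (deriv n t 0 * n t 0 + n t 0 * deriv n t 0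
        + (deriv n t 1 * n t 1 + n t 1 * deriv n t 1
        + (deriv n t 2 * n t 2 + n t 2 * deriv n t 2)))
       + lam * (deriv m t 0 * e t 0 + m t 0 * deriv e t 0
        + (deriv m t 1 * e t 1 + m t 1 * deriv e t 1
        + (deriv m t 2 * e t 2 + m t 2 * deriv e t 2)))) t := by
    have : (fun s => (1 / 2) * (n s ⬝ᵥ n s) + lam * (m s ⬝ᵥ e s))
        = fun s => (1/2) * (n s 0 * n s 0 + (n s 1 * n s 1 + n s 2 * n s 2))
          + lam * (m s 0 * e s 0 + (m s 1 * e s 1 + m s 2 * e s 2)) := by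
      funext s; simp [dotProduct, Fin.sum_univ_three]; ring
    rw [this]
    have hd := ((((Hn 0).mul (Hn 0)).add (((Hn 1).mul (Hn 1)).add ((Hn 2).mul (Hn 2)))).const_mul (1/2)).add
      (((((Hm 0).mul (He 0)).add (((Hm 1).mul (He 1)).add ((Hm 2).mul (He 2)))).const_mul lam)
      : HasDerivAt _ _ t)
    exact hd
  rw [key.deriv]
  have hdn := heqn t
  have hdm := heqm t
  have hde := heqe t
  rw [hu t, hw t] at hdn hdm
  rw [hu t] at hde
  have en0 : deriv n t 0 = _ := congrFun hdn 0
  have en1 : deriv n t 1 = _ := congrFun hdn 1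
  have en2 : deriv n t 2 = _ := congrFun hdn 2
  have em0 : deriv m t 0 = _ := congrFun hdm 0
  have em1 : deriv m t 1 = _ := congrFun hdm 1
  have em2 : deriv m t 2 = _ := congrFun hdm 2
  have ee0 : deriv e t 0 = _ := congrFun hde 0
  have ee1 : deriv e t 1 = _ := congrFun hde 1
  have ee2 : deriv e t 2 = _ := congrFun hde 2
  simp only [crossProduct, Pi.add_apply, Pi.smul_apply, smul_eq_mul,
    LinearMap.mk₂_apply, Matrix.cons_val_zero, Matrix.cons_val_one, Matrix.head_cons,
    Matrix.cons_val_two, Matrix.tail_cons] at en0 en1 en2 em0 em1 em2 ee0 ee1 ee2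
  rw [en0, en1, en2, em0, em1, em2, ee0, ee1, ee2]
  field_simp
  ring
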